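/- arXiv:1311.5199 — 4 statements merged into one kernel-verified Lean document; each statement's English description precedes it below -/
import Mathlib

section
/- Let ℓ₁, ℓ₂ > 0 and m, n ≥ 1 be integers satisfying √3·n·ℓ₁ = m·ℓ₂, let e_k(x₁,x₂) = cos(k₁πx₁/ℓ₁)cos(k₂πx₂/ℓ₂) on Ω = (0,ℓ₁)×(0,ℓ₂), and let ρ = π²(m²/ℓ₁² + n²/ℓ₂²). Then ∫_Ω (∇e_(m,n)·∇e_(2m,0))·e_(m,n) dx = ∫_Ω (∇e_(m,n)·∇e_(m,3n))·e_(0,2n) dx = ∫_Ω (∇e_(0,2n)·∇e_(m,3n))·e_(m,n) dx = (3/16)·ρ·ℓ₁ℓ₂. -/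
open MeasureTheory

/-- The Neumann eigenfunction `e_k(x₁,x₂) = cos(k₁πx₁/ℓ₁)·cos(k₂πx₂/ℓ₂)`. -/
noncomputable def ek (l₁ l₂ : ℝ) (k₁ k₂ : ℕ) (x₁ x₂ : ℝ) : ℝ :=
  Real.cos ((k₁ : ℝ) * Real.pi * x₁ / l₁) * Real.cos ((k₂ : ℝ) * Real.pi * x₂ / l₂)

/-- The Euclidean inner product of the gradients of two functions of two
real variables. -/
noncomputable def gradDot (f g : ℝ → ℝ → ℝ) (x₁ x₂ : ℝ) : ℝ :=
  deriv (fun t => f t x₂) x₁ * deriv (fun t => g t x₂) x₁ +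
    deriv (fun t => f x₁ t) x₂ * deriv (fun t => g x₁ t) x₂

lemma hasDerivAt_coskx (L : ℝ) (k : ℕ) (x : ℝ) :
    HasDerivAt (fun t => Real.cos ((k:ℝ) * Real.pi * t / L))
      (-((k:ℝ) * Real.pi / L) * Real.sin ((k:ℝ) * Real.pi * x / L)) x := by
  have h : HasDerivAt (fun t : ℝ => (k:ℝ) * Real.pi * t / L) ((k:ℝ) * Real.pi / L) x := by
    simpa using ((hasDerivAt_id x).const_mul ((k:ℝ) * Real.pi)).div_const L
  have := h.cos
  convert this using 1
  ring

lemma deriv_ek_fst (l₁ l₂ : ℝ) (k₁ k₂ : ℕ) (x₁ x₂ : ℝ) :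
    deriv (fun t => ek l₁ l₂ k₁ k₂ t x₂) x₁ =
      -((k₁:ℝ) * Real.pi / l₁) * Real.sin ((k₁:ℝ) * Real.pi * x₁ / l₁) *
        Real.cos ((k₂:ℝ) * Real.pi * x₂ / l₂) := by
  simp only [ek]
  exact ((hasDerivAt_coskx l₁ k₁ x₁).mul_const _).deriv

lemma deriv_ek_snd (l₁ l₂ : ℝ) (k₁ k₂ : ℕ) (x₁ x₂ : ℝ) :
    deriv (fun t => ek l₁ l₂ k₁ k₂ x₁ t) x₂ =
      Real.cos ((k₁:ℝ) * Real.pi * x₁ / l₁) *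
        (-((k₂:ℝ) * Real.pi / l₂) * Real.sin ((k₂:ℝ) * Real.pi * x₂ / l₂)) := by
  simp only [ek]
  exact ((hasDerivAt_coskx l₂ k₂ x₂).const_mul _).deriv

lemma integral_cos_nat {L : ℝ} (hL : 0 < L) {j : ℕ} (hj : j ≠ 0) :
    ∫ x in (0:ℝ)..L, Real.cos ((j:ℝ) * Real.pi * x / L) = 0 := by
  have hj' : (0:ℝ) < (j:ℝ) := by exact_mod_cast Nat.pos_of_ne_zero hj
  have hc : (j:ℝ) * Real.pi / L ≠ 0 := by positivity
  have h1 : ∀ x : ℝ, (j:ℝ) * Real.pi * x / L = ((j:ℝ) * Real.pi / L) * x := fun x => by ring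
  simp_rw [h1]
  rw [intervalIntegral.integral_comp_mul_left Real.cos hc]
  have h2 : ((j:ℝ) * Real.pi / L) * L = (j:ℝ) * Real.pi := by field_simp
  simp [h2, Real.sin_nat_mul_pi]

lemma integral_of_cos_comb {L : ℝ} {j₁ j₂ j₃ : ℕ} (hL : 0 < L)
    (hj₁ : j₁ ≠ 0) (hj₂ : j₂ ≠ 0) (hj₃ : j₃ ≠ 0) {f : ℝ → ℝ} (c₀ a₁ a₂ a₃ : ℝ)
    (hf : ∀ x, f x = c₀ + a₁ * Real.cos ((j₁:ℝ)*Real.pi*x/L) + a₂ * Real.cos ((j₂:ℝ)*Real.pi*x/L)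
      + a₃ * Real.cos ((j₃:ℝ)*Real.pi*x/L)) :
    ∫ x in (0:ℝ)..L, f x = c₀ * L := by
  have hi : ∀ j : ℕ, IntervalIntegrable (fun x => Real.cos ((j:ℝ)*Real.pi*x/L)) volume 0 L := by
    intro j
    exact (Continuous.intervalIntegrable (by fun_prop) 0 L)
  have h0 : IntervalIntegrable (fun _ : ℝ => c₀) volume 0 L := intervalIntegrable_const
  simp_rw [hf]
  rw [intervalIntegral.integral_add ((h0.add ((hi j₁).const_mul a₁)).add ((hi j₂).const_mul a₂))
        ((hi j₃).const_mul a₃),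
      intervalIntegral.integral_add (h0.add ((hi j₁).const_mul a₁)) ((hi j₂).const_mul a₂),
      intervalIntegral.integral_add h0 ((hi j₁).const_mul a₁),
      intervalIntegral.integral_const_mul, intervalIntegral.integral_const_mul,
      intervalIntegral.integral_const_mul,
      integral_cos_nat hL hj₁, integral_cos_nat hL hj₂, integral_cos_nat hL hj₃,
      intervalIntegral.integral_const]
  simp [smul_eq_mul]; ring

lemma trig_A (t : ℝ) : Real.sin t * Real.sin (2*t) * Real.cos t
    = 1/4 + (-(1/4)) * Real.cos (4*t) + 0 * Real.cos (4*t) + 0 * Real.cos (4*t) := by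
  have h4 : Real.cos (4*t) = 2*(2*Real.cos t^2 - 1)^2 - 1 := by
    rw [show (4:ℝ)*t = 2*(2*t) by ring, Real.cos_two_mul, Real.cos_two_mul]
  rw [Real.sin_two_mul, h4]
  linear_combination (2*Real.cos t^2) * Real.sin_sq_add_cos_sq t

lemma trig_B (t : ℝ) : Real.cos t ^ 2
    = 1/2 + (1/2) * Real.cos (2*t) + 0 * Real.cos (2*t) + 0 * Real.cos (2*t) := by
  rw [Real.cos_two_mul]; ring

lemma trig_C (t : ℝ) : Real.sin t ^ 2
    = 1/2 + (-(1/2)) * Real.cos (2*t) + 0 * Real.cos (2*t) + 0 * Real.cos (2*t) := by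
  rw [Real.cos_two_mul]
  linear_combination Real.sin_sq_add_cos_sq t

lemma trig_D (t : ℝ) : Real.cos t * Real.cos (3*t) * Real.cos (2*t)
    = 1/4 + (1/4) * Real.cos (2*t) + (1/4) * Real.cos (4*t) + (1/4) * Real.cos (6*t) := by
  have h4 : Real.cos (4*t) = 2*(2*Real.cos t^2 - 1)^2 - 1 := by
    rw [show (4:ℝ)*t = 2*(2*t) by ring, Real.cos_two_mul, Real.cos_two_mul]
  have h6 : Real.cos (6*t) = 2*(4*Real.cos t^3 - 3*Real.cos t)^2 - 1 := by
    rw [show (6:ℝ)*t = 2*(3*t) by ring, Real.cos_two_mul, Real.cos_three_mul]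
  rw [Real.cos_three_mul, h4, h6, Real.cos_two_mul]
  ring

lemma trig_E (t : ℝ) : Real.sin t * Real.sin (3*t) * Real.cos (2*t)
    = 1/4 + (-(1/4)) * Real.cos (2*t) + (1/4) * Real.cos (4*t) + (-(1/4)) * Real.cos (6*t) := by
  have h4 : Real.cos (4*t) = 2*(2*Real.cos t^2 - 1)^2 - 1 := by
    rw [show (4:ℝ)*t = 2*(2*t) by ring, Real.cos_two_mul, Real.cos_two_mul]
  have h6 : Real.cos (6*t) = 2*(4*Real.cos t^3 - 3*Real.cos t)^2 - 1 := by
    rw [show (6:ℝ)*t = 2*(3*t) by ring, Real.cos_two_mul, Real.cos_three_mul]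
  rw [Real.sin_three_mul, h4, h6, Real.cos_two_mul]
  linear_combination ((2*Real.cos t^2-1)*(4*Real.cos t^2-1-4*Real.sin t^2)) * Real.sin_sq_add_cos_sq t

lemma trig_F (t : ℝ) : Real.sin (2*t) * Real.sin (3*t) * Real.cos t
    = 1/4 + (1/4) * Real.cos (2*t) + (-(1/4)) * Real.cos (4*t) + (-(1/4)) * Real.cos (6*t) := by
  have h4 : Real.cos (4*t) = 2*(2*Real.cos t^2 - 1)^2 - 1 := by
    rw [show (4:ℝ)*t = 2*(2*t) by ring, Real.cos_two_mul, Real.cos_two_mul]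
  have h6 : Real.cos (6*t) = 2*(4*Real.cos t^3 - 3*Real.cos t)^2 - 1 := by
    rw [show (6:ℝ)*t = 2*(3*t) by ring, Real.cos_two_mul, Real.cos_three_mul]
  rw [Real.sin_two_mul, Real.sin_three_mul, h4, h6, Real.cos_two_mul]
  linear_combination (2*Real.cos t^2*(4*Real.cos t^2-1-4*Real.sin t^2)) * Real.sin_sq_add_cos_sq t

lemma I_A {L : ℝ} (hL : 0 < L) {k : ℕ} (hk : k ≠ 0) :
    ∫ x in (0:ℝ)..L, Real.sin ((k:ℝ)*Real.pi*x/L) * Real.sin (((2*k:ℕ):ℝ)*Real.pi*x/L)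
      * Real.cos ((k:ℝ)*Real.pi*x/L) = L/4 := by
  have h := integral_of_cos_comb (j₁ := 4*k) (j₂ := 4*k) (j₃ := 4*k) hL
    (by omega) (by omega) (by omega)
    (f := fun x => Real.sin ((k:ℝ)*Real.pi*x/L) * Real.sin (((2*k:ℕ):ℝ)*Real.pi*x/L)
      * Real.cos ((k:ℝ)*Real.pi*x/L)) (1/4) (-(1/4)) 0 0 ?_
  · rw [h]; ring
  · intro x
    push_cast
    rw [show (2:ℝ)*(k:ℝ)*Real.pi*x/L = 2*((k:ℝ)*Real.pi*x/L) by ring,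
        show (4:ℝ)*(k:ℝ)*Real.pi*x/L = 4*((k:ℝ)*Real.pi*x/L) by ring]
    exact trig_A _

lemma I_B {L : ℝ} (hL : 0 < L) {k : ℕ} (hk : k ≠ 0) :
    ∫ x in (0:ℝ)..L, Real.cos ((k:ℝ)*Real.pi*x/L) ^ 2 = L/2 := by
  have h := integral_of_cos_comb (j₁ := 2*k) (j₂ := 2*k) (j₃ := 2*k) hL
    (by omega) (by omega) (by omega)
    (f := fun x => Real.cos ((k:ℝ)*Real.pi*x/L) ^ 2) (1/2) (1/2) 0 0 ?_
  · rw [h]; ring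
  · intro x
    push_cast
    rw [show (2:ℝ)*(k:ℝ)*Real.pi*x/L = 2*((k:ℝ)*Real.pi*x/L) by ring]
    exact trig_B _

lemma I_C {L : ℝ} (hL : 0 < L) {k : ℕ} (hk : k ≠ 0) :
    ∫ x in (0:ℝ)..L, Real.sin ((k:ℝ)*Real.pi*x/L) ^ 2 = L/2 := by
  have h := integral_of_cos_comb (j₁ := 2*k) (j₂ := 2*k) (j₃ := 2*k) hL
    (by omega) (by omega) (by omega)
    (f := fun x => Real.sin ((k:ℝ)*Real.pi*x/L) ^ 2) (1/2) (-(1/2)) 0 0 ?_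
  · rw [h]; ring
  · intro x
    push_cast
    rw [show (2:ℝ)*(k:ℝ)*Real.pi*x/L = 2*((k:ℝ)*Real.pi*x/L) by ring]
    exact trig_C _

lemma I_D {L : ℝ} (hL : 0 < L) {k : ℕ} (hk : k ≠ 0) :
    ∫ x in (0:ℝ)..L, Real.cos ((k:ℝ)*Real.pi*x/L) * Real.cos (((3*k:ℕ):ℝ)*Real.pi*x/L)
      * Real.cos (((2*k:ℕ):ℝ)*Real.pi*x/L) = L/4 := by
  have h := integral_of_cos_comb (j₁ := 2*k) (j₂ := 4*k) (j₃ := 6*k) hL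
    (by omega) (by omega) (by omega)
    (f := fun x => Real.cos ((k:ℝ)*Real.pi*x/L) * Real.cos (((3*k:ℕ):ℝ)*Real.pi*x/L)
      * Real.cos (((2*k:ℕ):ℝ)*Real.pi*x/L)) (1/4) (1/4) (1/4) (1/4) ?_
  · rw [h]; ring
  · intro x
    push_cast
    rw [show (2:ℝ)*(k:ℝ)*Real.pi*x/L = 2*((k:ℝ)*Real.pi*x/L) by ring,
        show (3:ℝ)*(k:ℝ)*Real.pi*x/L = 3*((k:ℝ)*Real.pi*x/L) by ring,
        show (4:ℝ)*(k:ℝ)*Real.pi*x/L = 4*((k:ℝ)*Real.pi*x/L) by ring,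
        show (6:ℝ)*(k:ℝ)*Real.pi*x/L = 6*((k:ℝ)*Real.pi*x/L) by ring]
    exact trig_D _

lemma I_E {L : ℝ} (hL : 0 < L) {k : ℕ} (hk : k ≠ 0) :
    ∫ x in (0:ℝ)..L, Real.sin ((k:ℝ)*Real.pi*x/L) * Real.sin (((3*k:ℕ):ℝ)*Real.pi*x/L)
      * Real.cos (((2*k:ℕ):ℝ)*Real.pi*x/L) = L/4 := by
  have h := integral_of_cos_comb (j₁ := 2*k) (j₂ := 4*k) (j₃ := 6*k) hL
    (by omega) (by omega) (by omega)
    (f := fun x => Real.sin ((k:ℝ)*Real.pi*x/L) * Real.sin (((3*k:ℕ):ℝ)*Real.pi*x/L)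
      * Real.cos (((2*k:ℕ):ℝ)*Real.pi*x/L)) (1/4) (-(1/4)) (1/4) (-(1/4)) ?_
  · rw [h]; ring
  · intro x
    push_cast
    rw [show (2:ℝ)*(k:ℝ)*Real.pi*x/L = 2*((k:ℝ)*Real.pi*x/L) by ring,
        show (3:ℝ)*(k:ℝ)*Real.pi*x/L = 3*((k:ℝ)*Real.pi*x/L) by ring,
        show (4:ℝ)*(k:ℝ)*Real.pi*x/L = 4*((k:ℝ)*Real.pi*x/L) by ring,
        show (6:ℝ)*(k:ℝ)*Real.pi*x/L = 6*((k:ℝ)*Real.pi*x/L) by ring]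
    exact trig_E _

lemma I_F {L : ℝ} (hL : 0 < L) {k : ℕ} (hk : k ≠ 0) :
    ∫ x in (0:ℝ)..L, Real.sin (((2*k:ℕ):ℝ)*Real.pi*x/L) * Real.sin (((3*k:ℕ):ℝ)*Real.pi*x/L)
      * Real.cos ((k:ℝ)*Real.pi*x/L) = L/4 := by
  have h := integral_of_cos_comb (j₁ := 2*k) (j₂ := 4*k) (j₃ := 6*k) hL
    (by omega) (by omega) (by omega)
    (f := fun x => Real.sin (((2*k:ℕ):ℝ)*Real.pi*x/L) * Real.sin (((3*k:ℕ):ℝ)*Real.pi*x/L)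
      * Real.cos ((k:ℝ)*Real.pi*x/L)) (1/4) (1/4) (-(1/4)) (-(1/4)) ?_
  · rw [h]; ring
  · intro x
    push_cast
    rw [show (2:ℝ)*(k:ℝ)*Real.pi*x/L = 2*((k:ℝ)*Real.pi*x/L) by ring,
        show (3:ℝ)*(k:ℝ)*Real.pi*x/L = 3*((k:ℝ)*Real.pi*x/L) by ring,
        show (4:ℝ)*(k:ℝ)*Real.pi*x/L = 4*((k:ℝ)*Real.pi*x/L) by ring,
        show (6:ℝ)*(k:ℝ)*Real.pi*x/L = 6*((k:ℝ)*Real.pi*x/L) by ring]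
    exact trig_F _

/-- Under the hexagonal resonance condition `√3·n·ℓ₁ = m·ℓ₂`, the gradient
interaction coefficients satisfy
`⟨∇e_(m,n)·∇e_(2m,0), e_(m,n)⟩ = ⟨∇e_(m,n)·∇e_(m,3n), e_(0,2n)⟩ =
⟨∇e_(0,2n)·∇e_(m,3n), e_(m,n)⟩ = (3/16)ρℓ₁ℓ₂`,
where `ρ = π²(m²/ℓ₁² + n²/ℓ₂²)`. -/
theorem stmt_9 (l₁ l₂ : ℝ) (h₁ : 0 < l₁) (h₂ : 0 < l₂) (m n : ℕ)
    (hm : 1 ≤ m) (hn : 1 ≤ n)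
    (hres : Real.sqrt 3 * (n : ℝ) * l₁ = (m : ℝ) * l₂) :
    let ρ : ℝ := Real.pi ^ 2 * ((m : ℝ) ^ 2 / l₁ ^ 2 + (n : ℝ) ^ 2 / l₂ ^ 2)
    (∫ x₁ in (0 : ℝ)..l₁, ∫ x₂ in (0 : ℝ)..l₂,
        gradDot (ek l₁ l₂ m n) (ek l₁ l₂ (2 * m) 0) x₁ x₂ * ek l₁ l₂ m n x₁ x₂)
      = 3 / 16 * ρ * (l₁ * l₂) ∧
    (∫ x₁ in (0 : ℝ)..l₁, ∫ x₂ in (0 : ℝ)..l₂,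
        gradDot (ek l₁ l₂ m n) (ek l₁ l₂ m (3 * n)) x₁ x₂ * ek l₁ l₂ 0 (2 * n) x₁ x₂)
      = 3 / 16 * ρ * (l₁ * l₂) ∧
    (∫ x₁ in (0 : ℝ)..l₁, ∫ x₂ in (0 : ℝ)..l₂,
        gradDot (ek l₁ l₂ 0 (2 * n)) (ek l₁ l₂ m (3 * n)) x₁ x₂ * ek l₁ l₂ m n x₁ x₂)
      = 3 / 16 * ρ * (l₁ * l₂) := by
  intro ρ
  have hmn : m ≠ 0 := by omega
  have hnn : n ≠ 0 := by omega
  have hl₁ : l₁ ≠ 0 := h₁.ne'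
  have hl₂ : l₂ ≠ 0 := h₂.ne'
  have hsq : 3 * (n:ℝ)^2 * l₁^2 = (m:ℝ)^2 * l₂^2 := by
    have h3 : Real.sqrt 3 ^ 2 = 3 := Real.sq_sqrt (by norm_num)
    calc 3 * (n:ℝ)^2*l₁^2 = (Real.sqrt 3 * (n:ℝ) * l₁)^2 := by rw [mul_pow, mul_pow, h3]
      _ = ((m:ℝ)*l₂)^2 := by rw [hres]
      _ = (m:ℝ)^2*l₂^2 := by ring
  have hmval : (m:ℝ)^2 = 3*(n:ℝ)^2*l₁^2/l₂^2 := by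
    field_simp
    linear_combination -hsq
  refine ⟨?_, ?_, ?_⟩
  · -- first integral
    have hinner : ∀ x₁ : ℝ,
        (∫ x₂ in (0:ℝ)..l₂, gradDot (ek l₁ l₂ m n) (ek l₁ l₂ (2*m) 0) x₁ x₂ * ek l₁ l₂ m n x₁ x₂)
        = (2*((m:ℝ)*Real.pi/l₁)^2 * (l₂/2)) *
          (Real.sin ((m:ℝ)*Real.pi*x₁/l₁) * Real.sin (((2*m:ℕ):ℝ)*Real.pi*x₁/l₁)
            * Real.cos ((m:ℝ)*Real.pi*x₁/l₁)) := by
      intro x₁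
      have hpt : ∀ x₂ : ℝ, gradDot (ek l₁ l₂ m n) (ek l₁ l₂ (2*m) 0) x₁ x₂ * ek l₁ l₂ m n x₁ x₂
          = (2*((m:ℝ)*Real.pi/l₁)^2 * (Real.sin ((m:ℝ)*Real.pi*x₁/l₁)
              * Real.sin (((2*m:ℕ):ℝ)*Real.pi*x₁/l₁) * Real.cos ((m:ℝ)*Real.pi*x₁/l₁)))
            * Real.cos ((n:ℝ)*Real.pi*x₂/l₂)^2 := by
        intro x₂
        simp only [gradDot, deriv_ek_fst, deriv_ek_snd]
        simp only [ek]
        push_cast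
        norm_num
        ring
      simp only [hpt]
      rw [intervalIntegral.integral_const_mul, I_B h₂ hnn]
      ring
    simp only [hinner]
    rw [intervalIntegral.integral_const_mul, I_A h₁ hmn]
    show (2*((m:ℝ)*Real.pi/l₁)^2 * (l₂/2)) * (l₁/4)
      = 3/16 * (Real.pi ^ 2 * ((m:ℝ)^2/l₁^2 + (n:ℝ)^2/l₂^2)) * (l₁*l₂)
    rw [show ((m:ℝ)*Real.pi/l₁)^2 = (m:ℝ)^2*Real.pi^2/l₁^2 by ring, hmval]
    field_simp
    ring
  · -- second integral
    have hinner : ∀ x₁ : ℝ,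
        (∫ x₂ in (0:ℝ)..l₂, gradDot (ek l₁ l₂ m n) (ek l₁ l₂ m (3*n)) x₁ x₂ * ek l₁ l₂ 0 (2*n) x₁ x₂)
        = (((m:ℝ)*Real.pi/l₁)^2 * (l₂/4)) * Real.sin ((m:ℝ)*Real.pi*x₁/l₁)^2
          + (3*((n:ℝ)*Real.pi/l₂)^2 * (l₂/4)) * Real.cos ((m:ℝ)*Real.pi*x₁/l₁)^2 := by
      intro x₁
      have hpt : ∀ x₂ : ℝ, gradDot (ek l₁ l₂ m n) (ek l₁ l₂ m (3*n)) x₁ x₂ * ek l₁ l₂ 0 (2*n) x₁ x₂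
          = (((m:ℝ)*Real.pi/l₁)^2 * Real.sin ((m:ℝ)*Real.pi*x₁/l₁)^2)
              * (Real.cos ((n:ℝ)*Real.pi*x₂/l₂) * Real.cos (((3*n:ℕ):ℝ)*Real.pi*x₂/l₂)
                * Real.cos (((2*n:ℕ):ℝ)*Real.pi*x₂/l₂))
            + (3*((n:ℝ)*Real.pi/l₂)^2 * Real.cos ((m:ℝ)*Real.pi*x₁/l₁)^2)
              * (Real.sin ((n:ℝ)*Real.pi*x₂/l₂) * Real.sin (((3*n:ℕ):ℝ)*Real.pi*x₂/l₂)
                * Real.cos (((2*n:ℕ):ℝ)*Real.pi*x₂/l₂)) := by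
        intro x₂
        simp only [gradDot, deriv_ek_fst, deriv_ek_snd]
        simp only [ek]
        push_cast
        norm_num
        ring
      have hA : IntervalIntegrable (fun x₂ : ℝ =>
          (((m:ℝ)*Real.pi/l₁)^2 * Real.sin ((m:ℝ)*Real.pi*x₁/l₁)^2)
            * (Real.cos ((n:ℝ)*Real.pi*x₂/l₂) * Real.cos (((3*n:ℕ):ℝ)*Real.pi*x₂/l₂)
              * Real.cos (((2*n:ℕ):ℝ)*Real.pi*x₂/l₂))) volume 0 l₂ :=
        Continuous.intervalIntegrable (by fun_prop) 0 l₂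
      have hB : IntervalIntegrable (fun x₂ : ℝ =>
          (3*((n:ℝ)*Real.pi/l₂)^2 * Real.cos ((m:ℝ)*Real.pi*x₁/l₁)^2)
            * (Real.sin ((n:ℝ)*Real.pi*x₂/l₂) * Real.sin (((3*n:ℕ):ℝ)*Real.pi*x₂/l₂)
              * Real.cos (((2*n:ℕ):ℝ)*Real.pi*x₂/l₂))) volume 0 l₂ :=
        Continuous.intervalIntegrable (by fun_prop) 0 l₂
      simp only [hpt]
      rw [intervalIntegral.integral_add hA hB, intervalIntegral.integral_const_mul,
        intervalIntegral.integral_const_mul, I_D h₂ hnn, I_E h₂ hnn]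
      ring
    simp only [hinner]
    have hA : IntervalIntegrable (fun x₁ : ℝ =>
        (((m:ℝ)*Real.pi/l₁)^2 * (l₂/4)) * Real.sin ((m:ℝ)*Real.pi*x₁/l₁)^2) volume 0 l₁ :=
      Continuous.intervalIntegrable (by fun_prop) 0 l₁
    have hB : IntervalIntegrable (fun x₁ : ℝ =>
        (3*((n:ℝ)*Real.pi/l₂)^2 * (l₂/4)) * Real.cos ((m:ℝ)*Real.pi*x₁/l₁)^2) volume 0 l₁ :=
      Continuous.intervalIntegrable (by fun_prop) 0 l₁
    rw [intervalIntegral.integral_add hA hB, intervalIntegral.integral_const_mul,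
      intervalIntegral.integral_const_mul, I_C h₁ hmn, I_B h₁ hmn]
    show (((m:ℝ)*Real.pi/l₁)^2 * (l₂/4)) * (l₁/2) + (3*((n:ℝ)*Real.pi/l₂)^2 * (l₂/4)) * (l₁/2)
      = 3/16 * (Real.pi ^ 2 * ((m:ℝ)^2/l₁^2 + (n:ℝ)^2/l₂^2)) * (l₁*l₂)
    rw [show ((m:ℝ)*Real.pi/l₁)^2 = (m:ℝ)^2*Real.pi^2/l₁^2 by ring, hmval]
    field_simp
    ring
  · -- third integral
    have hinner : ∀ x₁ : ℝ,
        (∫ x₂ in (0:ℝ)..l₂, gradDot (ek l₁ l₂ 0 (2*n)) (ek l₁ l₂ m (3*n)) x₁ x₂ * ek l₁ l₂ m n x₁ x₂)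
        = (6*((n:ℝ)*Real.pi/l₂)^2 * (l₂/4)) * Real.cos ((m:ℝ)*Real.pi*x₁/l₁)^2 := by
      intro x₁
      have hpt : ∀ x₂ : ℝ, gradDot (ek l₁ l₂ 0 (2*n)) (ek l₁ l₂ m (3*n)) x₁ x₂ * ek l₁ l₂ m n x₁ x₂
          = (6*((n:ℝ)*Real.pi/l₂)^2 * Real.cos ((m:ℝ)*Real.pi*x₁/l₁)^2)
              * (Real.sin (((2*n:ℕ):ℝ)*Real.pi*x₂/l₂) * Real.sin (((3*n:ℕ):ℝ)*Real.pi*x₂/l₂)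
                * Real.cos ((n:ℝ)*Real.pi*x₂/l₂)) := by
        intro x₂
        simp only [gradDot, deriv_ek_fst, deriv_ek_snd]
        simp only [ek]
        push_cast
        norm_num
        ring
      simp only [hpt]
      rw [intervalIntegral.integral_const_mul, I_F h₂ hnn]
      ring
    simp only [hinner]
    rw [intervalIntegral.integral_const_mul, I_B h₁ hmn]
    show (6*((n:ℝ)*Real.pi/l₂)^2 * (l₂/4)) * (l₁/2)
      = 3/16 * (Real.pi ^ 2 * ((m:ℝ)^2/l₁^2 + (n:ℝ)^2/l₂^2)) * (l₁*l₂)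
    rw [hmval]
    field_simp
    ring
end

section
/- Let σ > 0 and 𝔟₁, 𝔟₂ ∈ ℝ satisfy 𝔟₁ < 0, 𝔟₁ + 2𝔟₂ < 0, 𝔟₁ + 4𝔟₂ < 0, and 𝔟₁(𝔟₁ + 2𝔟₂) ≠ 8𝔟₂². Define F(y₁,y₂) = (σy₁ + (1/4)(𝔟₁+2𝔟₂)y₁³ + 2𝔟₂y₁y₂², σy₂ + 𝔟₁y₂³ + 𝔟₂y₂y₁²). Then F(y₁,y₂) = (0,0) if and only if (y₁,y₂) is one of the following nine points: the origin (0,0); the two strip points (0, ±s) with s = √(−σ/𝔟₁); the two rectangular points (±r, 0) with r = √(−4σ/(𝔟₁+2𝔟₂)); and the four hexagonal points (±2c, ±c) (all four sign combinations) with c = √(−σ/(𝔟₁+4𝔟₂)). In particular F has exactly eight nonzero equilibrium points. -/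
/-- Complete classification of the equilibria of the truncated transition
field (with `𝔞 = 0`): under `𝔟₁ < 0`, `𝔟₁ + 2𝔟₂ < 0`, `𝔟₁ + 4𝔟₂ < 0` and
`𝔟₁(𝔟₁+2𝔟₂) ≠ 8𝔟₂²`, the zeros of `F` are exactly the origin, the two strip
points `(0, ±s)`, the two rectangular points `(±r, 0)`, and the four
hexagonal points `(±2c, ±c)`; in particular there are exactly eight nonzero
equilibrium points. -/
theorem stmt_15 (σ b₁ b₂ : ℝ) (hσ : 0 < σ) (hb₁ : b₁ < 0)
    (hb12 : b₁ + 2 * b₂ < 0) (hb14 : b₁ + 4 * b₂ < 0)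
    (hnd : b₁ * (b₁ + 2 * b₂) ≠ 8 * b₂ ^ 2) :
    let F : ℝ → ℝ → ℝ × ℝ := fun y₁ y₂ =>
      (σ * y₁ + 1 / 4 * (b₁ + 2 * b₂) * y₁ ^ 3 + 2 * b₂ * y₁ * y₂ ^ 2,
       σ * y₂ + b₁ * y₂ ^ 3 + b₂ * y₂ * y₁ ^ 2)
    let s : ℝ := Real.sqrt (-σ / b₁)
    let r : ℝ := Real.sqrt (-4 * σ / (b₁ + 2 * b₂))
    let c : ℝ := Real.sqrt (-σ / (b₁ + 4 * b₂))
    ∀ y₁ y₂ : ℝ, F y₁ y₂ = (0, 0) ↔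
      (y₁, y₂) = (0, 0) ∨
      (y₁, y₂) = (0, s) ∨ (y₁, y₂) = (0, -s) ∨
      (y₁, y₂) = (r, 0) ∨ (y₁, y₂) = (-r, 0) ∨
      (y₁, y₂) = (2 * c, c) ∨ (y₁, y₂) = (-(2 * c), -c) ∨
      (y₁, y₂) = (-(2 * c), c) ∨ (y₁, y₂) = (2 * c, -c) := by
  intro F s r c y₁ y₂
  have hb₁0 : b₁ ≠ 0 := ne_of_lt hb₁
  have hb120 : b₁ + 2 * b₂ ≠ 0 := ne_of_lt hb12
  have hb140 : b₁ + 4 * b₂ ≠ 0 := ne_of_lt hb14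
  -- key identities
  have hs : b₁ * s ^ 2 + σ = 0 := by
    have h0 : (0:ℝ) ≤ -σ / b₁ := by
      rw [div_nonneg_iff]; right; constructor <;> linarith
    have := Real.sq_sqrt h0
    show b₁ * s ^ 2 + σ = 0
    rw [show s ^ 2 = -σ / b₁ from this]
    field_simp
    ring
  have hr : (b₁ + 2 * b₂) * r ^ 2 + 4 * σ = 0 := by
    have h0 : (0:ℝ) ≤ -4 * σ / (b₁ + 2 * b₂) := by
      rw [div_nonneg_iff]; right; constructor <;> linarith
    have := Real.sq_sqrt h0
    show (b₁ + 2 * b₂) * r ^ 2 + 4 * σ = 0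
    rw [show r ^ 2 = -4 * σ / (b₁ + 2 * b₂) from this]
    field_simp; ring
  have hc : (b₁ + 4 * b₂) * c ^ 2 + σ = 0 := by
    have h0 : (0:ℝ) ≤ -σ / (b₁ + 4 * b₂) := by
      rw [div_nonneg_iff]; right; constructor <;> linarith
    have := Real.sq_sqrt h0
    show (b₁ + 4 * b₂) * c ^ 2 + σ = 0
    rw [show c ^ 2 = -σ / (b₁ + 4 * b₂) from this]
    field_simp
    ring
  have hdet : b₁ * (b₁ + 2 * b₂) - 8 * b₂ ^ 2 ≠ 0 := sub_ne_zero.mpr hnd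
  constructor
  · intro h
    rw [Prod.mk.injEq] at h
    obtain ⟨e1, e2⟩ := h
    by_cases hy1 : y₁ = 0
    · subst hy1
      have e2' : y₂ * (b₁ * y₂ ^ 2 + σ) = 0 := by linear_combination e2
      rcases mul_eq_zero.mp e2' with h | h
      · left; simp [h]
      · -- y₂² = s²
        have hsq : (y₂ - s) * (y₂ + s) = 0 := by
          have hh : b₁ * ((y₂ - s) * (y₂ + s)) = 0 := by linear_combination h - hs
          exact (mul_eq_zero.mp hh).resolve_left hb₁0
        rcases mul_eq_zero.mp hsq with h' | h'
        · right; left; rw [Prod.mk.injEq]; constructor; rfl; linarith [sub_eq_zero.mp h']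
        · right; right; left; rw [Prod.mk.injEq]; constructor; rfl; linarith
    · by_cases hy2 : y₂ = 0
      · subst hy2
        have e1' : y₁ * (1/4 * (b₁ + 2 * b₂) * y₁ ^ 2 + σ) = 0 := by linear_combination e1
        rcases mul_eq_zero.mp e1' with h | h
        · exact absurd h hy1
        · have hsq : (y₁ - r) * (y₁ + r) = 0 := by
            have hh : (b₁ + 2 * b₂) * ((y₁ - r) * (y₁ + r)) = 0 := by
              linear_combination 4 * h - hr
            exact (mul_eq_zero.mp hh).resolve_left hb120
          rcases mul_eq_zero.mp hsq with h' | h'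
          · right; right; right; left; rw [Prod.mk.injEq]
            exact ⟨by linarith [sub_eq_zero.mp h'], rfl⟩
          · right; right; right; right; left; rw [Prod.mk.injEq]
            exact ⟨by linarith, rfl⟩
      · -- both nonzero: hexagonal points
        have E1 : σ + 1/4 * (b₁ + 2 * b₂) * y₁ ^ 2 + 2 * b₂ * y₂ ^ 2 = 0 := by
          apply mul_left_cancel₀ hy1
          linear_combination e1
        have E2 : σ + b₁ * y₂ ^ 2 + b₂ * y₁ ^ 2 = 0 := by
          apply mul_left_cancel₀ hy2
          linear_combination e2
        have hu : (b₁ * (b₁ + 2 * b₂) - 8 * b₂ ^ 2) * (y₁ ^ 2 - 4 * c ^ 2) = 0 := by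
          linear_combination 4 * b₁ * E1 - 8 * b₂ * E2 - 4 * (b₁ - 2 * b₂) * hc
        have hv : (b₁ * (b₁ + 2 * b₂) - 8 * b₂ ^ 2) * (y₂ ^ 2 - c ^ 2) = 0 := by
          linear_combination (b₁ + 2 * b₂) * E2 - 4 * b₂ * E1 - (b₁ - 2 * b₂) * hc
        have hu' : y₁ ^ 2 = 4 * c ^ 2 := by
          have := (mul_eq_zero.mp hu).resolve_left hdet; linarith
        have hv' : y₂ ^ 2 = c ^ 2 := by
          have := (mul_eq_zero.mp hv).resolve_left hdet; linarith
        have h1 : (y₁ - 2 * c) * (y₁ + 2 * c) = 0 := by linear_combination hu'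
        have h2 : (y₂ - c) * (y₂ + c) = 0 := by linear_combination hv'
        rcases mul_eq_zero.mp h1 with ha | ha <;> rcases mul_eq_zero.mp h2 with hb | hb
        · right; right; right; right; right; left
          rw [Prod.mk.injEq]; exact ⟨by linarith [sub_eq_zero.mp ha], by linarith [sub_eq_zero.mp hb]⟩
        · right; right; right; right; right; right; right; right
          rw [Prod.mk.injEq]; exact ⟨by linarith [sub_eq_zero.mp ha], by linarith⟩
        · right; right; right; right; right; right; right; left
          rw [Prod.mk.injEq]; exact ⟨by linarith, by linarith [sub_eq_zero.mp hb]⟩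
        · right; right; right; right; right; right; left
          rw [Prod.mk.injEq]; exact ⟨by linarith, by linarith⟩
  · intro h
    rcases h with h | h | h | h | h | h | h | h | h <;>
      rw [Prod.mk.injEq] at h <;> obtain ⟨h1, h2⟩ := h <;> subst h1 <;> subst h2 <;>
      show (_, _) = ((0:ℝ), (0:ℝ)) <;> rw [Prod.mk.injEq] <;> constructor
    · ring
    · ring
    · ring
    · linear_combination s * hs
    · ring
    · linear_combination -s * hs
    · linear_combination (r/4) * hr
    · ring
    · linear_combination (-r/4) * hr
    · ring
    · linear_combination 2 * c * hc
    · linear_combination c * hc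
    · linear_combination (-2) * c * hc
    · linear_combination -c * hc
    · linear_combination (-2) * c * hc
    · linear_combination c * hc
    · linear_combination 2 * c * hc
    · linear_combination -c * hc
end

section
/- Let σ > 0 and 𝔟₁, 𝔟₂ ∈ ℝ with 𝔟₁ + 4𝔟₂ < 0, set c = √(−σ/(𝔟₁+4𝔟₂)), and let F(y₁,y₂) = (σy₁ + (1/4)(𝔟₁+2𝔟₂)y₁³ + 2𝔟₂y₁y₂², σy₂ + 𝔟₁y₂³ + 𝔟₂y₂y₁²). Then the Jacobian matrix J = DF at the hexagonal equilibrium (2c, c) has trace(J) = 4(𝔟₁+𝔟₂)c² and det(J) = 4(𝔟₁+4𝔟₂)(𝔟₁−2𝔟₂)c⁴. In particular, if 𝔟₁ + 𝔟₂ < 0 then trace(J) < 0, and det(J) has sign opposite to the sign of 𝔟₁ − 2𝔟₂. -/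
lemma dcubic (p q r s x : ℝ) :
    deriv (fun t : ℝ => p + q * t + r * t ^ 2 + s * t ^ 3) x
      = q + 2 * r * x + 3 * s * x ^ 2 := by
  have h : HasDerivAt (fun t : ℝ => p + q * t + r * t ^ 2 + s * t ^ 3)
      (q + 2 * r * x + 3 * s * x ^ 2) x := by
    have h1 : HasDerivAt (fun t : ℝ => t) 1 x := hasDerivAt_id x
    have h2 : HasDerivAt (fun t : ℝ => t ^ 2) (2 * x) x := by
      simpa using hasDerivAt_pow 2 x
    have h3 : HasDerivAt (fun t : ℝ => t ^ 3) (3 * x ^ 2) x := by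
      simpa using hasDerivAt_pow 3 x
    have := (((hasDerivAt_const x p).add (h1.const_mul q)).add
      (h2.const_mul r)).add (h3.const_mul s)
    refine this.congr_deriv ?_
    ring
  exact h.deriv

/-- Trace and determinant of the Jacobian of the truncated transition field
(with `𝔞 = 0`) at the hexagonal equilibrium `(2c, c)`, `c = √(-σ/(𝔟₁+4𝔟₂))`:
`tr J = 4(𝔟₁+𝔟₂)c²` and `det J = 4(𝔟₁+4𝔟₂)(𝔟₁−2𝔟₂)c⁴`; hence `tr J < 0`
when `𝔟₁+𝔟₂ < 0`, and `det J` has sign opposite to that of `𝔟₁−2𝔟₂`. -/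
theorem stmt_16 (σ b₁ b₂ : ℝ) (hσ : 0 < σ) (hb : b₁ + 4 * b₂ < 0) :
    let F₁ : ℝ → ℝ → ℝ := fun y₁ y₂ =>
      σ * y₁ + 1 / 4 * (b₁ + 2 * b₂) * y₁ ^ 3 + 2 * b₂ * y₁ * y₂ ^ 2
    let F₂ : ℝ → ℝ → ℝ := fun y₁ y₂ =>
      σ * y₂ + b₁ * y₂ ^ 3 + b₂ * y₂ * y₁ ^ 2
    let c : ℝ := Real.sqrt (-σ / (b₁ + 4 * b₂))
    let J₁₁ : ℝ := deriv (fun t => F₁ t c) (2 * c)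
    let J₁₂ : ℝ := deriv (fun t => F₁ (2 * c) t) c
    let J₂₁ : ℝ := deriv (fun t => F₂ t c) (2 * c)
    let J₂₂ : ℝ := deriv (fun t => F₂ (2 * c) t) c
    J₁₁ + J₂₂ = 4 * (b₁ + b₂) * c ^ 2 ∧
    J₁₁ * J₂₂ - J₁₂ * J₂₁ = 4 * (b₁ + 4 * b₂) * (b₁ - 2 * b₂) * c ^ 4 ∧
    (b₁ + b₂ < 0 → J₁₁ + J₂₂ < 0) ∧
    (0 < b₁ - 2 * b₂ → J₁₁ * J₂₂ - J₁₂ * J₂₁ < 0) ∧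
    (b₁ - 2 * b₂ < 0 → 0 < J₁₁ * J₂₂ - J₁₂ * J₂₁) ∧
    (b₁ - 2 * b₂ = 0 → J₁₁ * J₂₂ - J₁₂ * J₂₁ = 0) := by
  intro F₁ F₂ c J₁₁ J₁₂ J₂₁ J₂₂
  have hpos : 0 < -σ / (b₁ + 4 * b₂) := div_pos_of_neg_of_neg (by linarith) hb
  have hc2 : c ^ 2 = -σ / (b₁ + 4 * b₂) := Real.sq_sqrt hpos.le
  have hc2pos : 0 < c ^ 2 := hc2 ▸ hpos
  have hσc : σ = -(b₁ + 4 * b₂) * c ^ 2 := by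
    rw [hc2]; field_simp [ne_of_lt hb]
  have e11 : J₁₁ = σ + 3 * (1 / 4 * (b₁ + 2 * b₂)) * (2 * c) ^ 2 + 2 * b₂ * c ^ 2 := by
    show deriv (fun t => F₁ t c) (2 * c) = _
    have : (fun t => F₁ t c) =
        fun t => 0 + (σ + 2 * b₂ * c ^ 2) * t + 0 * t ^ 2 + (1 / 4 * (b₁ + 2 * b₂)) * t ^ 3 := by
      funext t; simp only [F₁]; ring
    rw [this, dcubic]; ring
  have e12 : J₁₂ = 2 * (2 * b₂ * (2 * c)) * c := by
    show deriv (fun t => F₁ (2 * c) t) c = _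
    have : (fun t => F₁ (2 * c) t) =
        fun t => (σ * (2 * c) + 1 / 4 * (b₁ + 2 * b₂) * (2 * c) ^ 3) + 0 * t
          + (2 * b₂ * (2 * c)) * t ^ 2 + 0 * t ^ 3 := by
      funext t; simp only [F₁]; ring
    rw [this, dcubic]; ring
  have e21 : J₂₁ = 2 * (b₂ * c) * (2 * c) := by
    show deriv (fun t => F₂ t c) (2 * c) = _
    have : (fun t => F₂ t c) =
        fun t => (σ * c + b₁ * c ^ 3) + 0 * t + (b₂ * c) * t ^ 2 + 0 * t ^ 3 := by
      funext t; simp only [F₂]; ring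
    rw [this, dcubic]; ring
  have e22 : J₂₂ = σ + 3 * b₁ * c ^ 2 + b₂ * (2 * c) ^ 2 := by
    show deriv (fun t => F₂ (2 * c) t) c = _
    have : (fun t => F₂ (2 * c) t) =
        fun t => 0 + (σ + b₂ * (2 * c) ^ 2) * t + 0 * t ^ 2 + b₁ * t ^ 3 := by
      funext t; simp only [F₂]; ring
    rw [this, dcubic]; ring
  have hc4 : 0 < c ^ 4 := by positivity
  have htr : J₁₁ + J₂₂ = 4 * (b₁ + b₂) * c ^ 2 := by
    rw [e11, e22, hσc]; ring
  have hdet : J₁₁ * J₂₂ - J₁₂ * J₂₁ = 4 * (b₁ + 4 * b₂) * (b₁ - 2 * b₂) * c ^ 4 := by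
    rw [e11, e12, e21, e22, hσc]; ring
  refine ⟨htr, hdet, fun h => ?_, fun h => ?_, fun h => ?_, fun h => ?_⟩
  · rw [htr]; nlinarith
  · rw [hdet]; nlinarith [mul_pos (mul_pos (neg_pos.mpr hb) h) hc4]
  · rw [hdet]; nlinarith [mul_pos (mul_pos (neg_pos.mpr hb) (neg_pos.mpr h)) hc4]
  · rw [hdet, h]; ring
end

section
/- Let σ > 0, 𝔞, 𝔟₂ ∈ ℝ, 𝔟₁ < 0, set s = √(−σ/𝔟₁), and let F(y₁,y₂) = (σy₁ + 4𝔞y₁² + (1/4)(𝔟₁+2𝔟₂)y₁³ + 2𝔟₂y₁y₂², σy₂ + 𝔞y₁y₂ + 𝔟₁y₂³ + 𝔟₂y₂y₁²). Then the Jacobian J = DF at the strip equilibrium (0, s) is lower triangular with diagonal entries σ + 2𝔟₂s² = σ(𝔟₁ − 2𝔟₂)/𝔟₁ and σ + 3𝔟₁s² = −2σ; consequently det(J) = −2σ²(𝔟₁ − 2𝔟₂)/𝔟₁ and the eigenvalues of J are σ(𝔟₁−2𝔟₂)/𝔟₁ and −2σ. -/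
/-- The Jacobian of the truncated transition field at the strip equilibrium
`(0, s)`, `s = √(-σ/𝔟₁)`, is lower triangular with diagonal entries
`σ + 2𝔟₂s² = σ(𝔟₁−2𝔟₂)/𝔟₁` and `σ + 3𝔟₁s² = −2σ`; hence
`det J = −2σ²(𝔟₁−2𝔟₂)/𝔟₁`, and the eigenvalues of `J` (the roots of its
characteristic polynomial) are exactly `σ(𝔟₁−2𝔟₂)/𝔟₁` and `−2σ`. -/
theorem stmt_17 (σ a b₁ b₂ : ℝ) (hσ : 0 < σ) (hb₁ : b₁ < 0) :
    let F₁ : ℝ → ℝ → ℝ := fun y₁ y₂ =>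
      σ * y₁ + 4 * a * y₁ ^ 2 + 1 / 4 * (b₁ + 2 * b₂) * y₁ ^ 3 + 2 * b₂ * y₁ * y₂ ^ 2
    let F₂ : ℝ → ℝ → ℝ := fun y₁ y₂ =>
      σ * y₂ + a * y₁ * y₂ + b₁ * y₂ ^ 3 + b₂ * y₂ * y₁ ^ 2
    let s : ℝ := Real.sqrt (-σ / b₁)
    let J₁₁ : ℝ := deriv (fun t => F₁ t s) 0
    let J₁₂ : ℝ := deriv (fun t => F₁ 0 t) s
    let J₂₁ : ℝ := deriv (fun t => F₂ t s) 0
    let J₂₂ : ℝ := deriv (fun t => F₂ 0 t) s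
    J₁₂ = 0 ∧
    J₁₁ = σ + 2 * b₂ * s ^ 2 ∧ J₁₁ = σ * (b₁ - 2 * b₂) / b₁ ∧
    J₂₂ = σ + 3 * b₁ * s ^ 2 ∧ J₂₂ = -2 * σ ∧
    J₁₁ * J₂₂ - J₁₂ * J₂₁ = -2 * σ ^ 2 * (b₁ - 2 * b₂) / b₁ ∧
    (∀ t : ℝ, (J₁₁ - t) * (J₂₂ - t) - J₁₂ * J₂₁ = 0 ↔
      t = σ * (b₁ - 2 * b₂) / b₁ ∨ t = -2 * σ) := by
  intro F₁ F₂ s J₁₁ J₁₂ J₂₁ J₂₂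
  have hb₁' : b₁ ≠ 0 := ne_of_lt hb₁
  have hs2 : s ^ 2 = -σ / b₁ := by
    have h : (0:ℝ) ≤ -σ / b₁ := le_of_lt (div_pos_of_neg_of_neg (by linarith) hb₁)
    simp [s, Real.sq_sqrt h]
  have hJ11 : J₁₁ = σ + 2 * b₂ * s ^ 2 := by
    have : (fun t : ℝ => F₁ t s)
        = (fun t : ℝ => σ * t + 4 * a * t ^ 2 + 1 / 4 * (b₁ + 2 * b₂) * t ^ 3
          + 2 * b₂ * s ^ 2 * t) := by funext t; simp only [F₁]; ring
    show deriv (fun t => F₁ t s) 0 = _; rw [this]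
    have h1 : HasDerivAt (fun t : ℝ => σ * t) σ 0 := by
      simpa using (hasDerivAt_id (0:ℝ)).const_mul σ
    have h2 : HasDerivAt (fun t : ℝ => 4 * a * t ^ 2) 0 0 := by
      simpa using (hasDerivAt_pow 2 (0:ℝ)).const_mul (4 * a)
    have h3 : HasDerivAt (fun t : ℝ => 1 / 4 * (b₁ + 2 * b₂) * t ^ 3) 0 0 := by
      simpa using (hasDerivAt_pow 3 (0:ℝ)).const_mul (1 / 4 * (b₁ + 2 * b₂))
    have h4 : HasDerivAt (fun t : ℝ => 2 * b₂ * s ^ 2 * t) (2 * b₂ * s ^ 2) 0 := by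
      simpa using (hasDerivAt_id (0:ℝ)).const_mul (2 * b₂ * s ^ 2)
    rw [(show HasDerivAt (fun t : ℝ => σ * t + 4 * a * t ^ 2 + 1 / 4 * (b₁ + 2 * b₂) * t ^ 3 + 2 * b₂ * s ^ 2 * t) _ 0 from (((h1.add h2).add h3).add h4)).deriv]
    ring
  have hJ12 : J₁₂ = 0 := by
    have : (fun t : ℝ => F₁ 0 t) = (fun _ : ℝ => (0:ℝ)) := by
      funext t; simp only [F₁]; ring
    simp [J₁₂, this]
  have hJ22 : J₂₂ = σ + 3 * b₁ * s ^ 2 := by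
    have : (fun t : ℝ => F₂ 0 t) = (fun t : ℝ => σ * t + b₁ * t ^ 3) := by
      funext t; simp only [F₂]; ring
    show deriv (fun t => F₂ 0 t) s = _; rw [this]
    have h1 : HasDerivAt (fun t : ℝ => σ * t) σ s := by
      simpa using (hasDerivAt_id s).const_mul σ
    have h2 : HasDerivAt (fun t : ℝ => b₁ * t ^ 3) (b₁ * (3 * s ^ 2)) s := by
      simpa using (hasDerivAt_pow 3 s).const_mul b₁
    rw [(show HasDerivAt (fun t : ℝ => σ * t + b₁ * t ^ 3) _ s from h1.add h2).deriv]
    ring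
  have hJ11' : J₁₁ = σ * (b₁ - 2 * b₂) / b₁ := by
    rw [hJ11, hs2]; field_simp; ring
  have hJ22' : J₂₂ = -2 * σ := by
    rw [hJ22, hs2]; field_simp; ring
  refine ⟨hJ12, hJ11, hJ11', hJ22, hJ22', ?_, ?_⟩
  · rw [hJ11', hJ22', hJ12]; ring
  · intro t
    rw [hJ11', hJ22', hJ12]
    constructor
    · intro h
      have h' : (σ * (b₁ - 2 * b₂) / b₁ - t) * (-2 * σ - t) = 0 := by linarith
      rcases mul_eq_zero.1 h' with h | h
      · left; linarith
      · right; linarith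
    · rintro (rfl | rfl) <;> ring
end
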